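/- Let I ⊆ ℝ be an open interval, a_1, a_2 ∈ I with sin(a_1 − a_2) ≠ 0. Then for every twice continuously differentiable f : I → ℝ and every x ∈ I: f(x) = (f(a_1) + ∫_{a_1}^x (f''(t) + f(t)) sin(a_1 − t) dt) · sin(x−a_2)/sin(a_1−a_2) + (f(a_2) + ∫_{a_2}^x (f''(t) + f(t)) sin(a_2 − t) dt) · sin(x−a_1)/sin(a_2−a_1). -/

import Mathlib

open intervalIntegral

theorem stmt_18 (I : Set ℝ) (hI : IsOpen I) (hne : I.Nonempty) (hconn : I.OrdConnected)
    (a1 a2 : ℝ) (ha1 : a1 ∈ I) (ha2 : a2 ∈ I) (hsin : Real.sin (a1 - a2) ≠ 0) :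
    ∀ f : ℝ → ℝ, ContDiffOn ℝ 2 f I → ∀ x ∈ I,
      f x = (f a1 + ∫ t in a1..x,
                (iteratedDerivWithin 2 f I t + f t) * Real.sin (a1 - t))
              * (Real.sin (x - a2) / Real.sin (a1 - a2))
            + (f a2 + ∫ t in a2..x,
                (iteratedDerivWithin 2 f I t + f t) * Real.sin (a2 - t))
              * (Real.sin (x - a1) / Real.sin (a2 - a1)) := by
  intro f hf x hx
  -- basic differentiability facts
  have hf1 : ContDiffOn ℝ 1 (deriv f) I := hf.deriv_of_isOpen hI (by norm_num)
  have hf2 : ContinuousOn (deriv (deriv f)) I := by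
    have := hf1.deriv_of_isOpen (m := 0) hI (by norm_num)
    simpa [contDiffOn_zero] using this
  have hdf : ∀ t ∈ I, HasDerivAt f (deriv f t) t := fun t ht =>
    ((hf.differentiableOn (by norm_num)).differentiableAt (hI.mem_nhds ht)).hasDerivAt
  have hddf : ∀ t ∈ I, HasDerivAt (deriv f) (deriv (deriv f) t) t := fun t ht =>
    ((hf1.differentiableOn (by norm_num)).differentiableAt (hI.mem_nhds ht)).hasDerivAt
  have h1 : ∀ s ∈ I, iteratedDerivWithin 1 f I s = deriv f s := by
    intro s hs
    rw [iteratedDerivWithin_one, derivWithin_of_isOpen hI hs]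
  have hiter : ∀ t ∈ I, iteratedDerivWithin 2 f I t = deriv (deriv f) t := by
    intro t ht
    rw [show (2:ℕ) = 1 + 1 from rfl, iteratedDerivWithin_succ,
      derivWithin_of_isOpen hI ht]
    exact Filter.EventuallyEq.deriv_eq
      (Filter.eventually_of_mem (hI.mem_nhds ht) h1)
  -- key FTC computation
  have key : ∀ a ∈ I, (f a + ∫ t in a..x,
      (iteratedDerivWithin 2 f I t + f t) * Real.sin (a - t))
      = deriv f x * Real.sin (a - x) + f x * Real.cos (a - x) := by
    intro a ha
    have hsub : Set.uIcc a x ⊆ I := hconn.uIcc_subset ha hx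
    have hF : ∀ t ∈ Set.uIcc a x, HasDerivAt
        (fun t => deriv f t * Real.sin (a - t) + f t * Real.cos (a - t))
        ((deriv (deriv f) t + f t) * Real.sin (a - t)) t := by
      intro t ht
      have htI := hsub ht
      have hs : HasDerivAt (fun t => Real.sin (a - t)) (-Real.cos (a - t)) t := by
        have := (Real.hasDerivAt_sin (a - t)).comp t
          ((hasDerivAt_const t a).sub (hasDerivAt_id t))
        exact this.congr_deriv (by ring)
      have hc : HasDerivAt (fun t => Real.cos (a - t)) (Real.sin (a - t)) t := by
        have := (Real.hasDerivAt_cos (a - t)).comp t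
          ((hasDerivAt_const t a).sub (hasDerivAt_id t))
        exact this.congr_deriv (by ring)
      have := ((hddf t htI).mul hs).add ((hdf t htI).mul hc)
      exact this.congr_deriv (by ring)
    have hcont : ContinuousOn (fun t => (deriv (deriv f) t + f t) * Real.sin (a - t))
        (Set.uIcc a x) := by
      apply ContinuousOn.mul
      · exact ((hf2.mono hsub).add ((hf.continuousOn).mono hsub))
      · exact (Real.continuous_sin.comp (continuous_const.sub continuous_id)).continuousOn
    have hint : IntervalIntegrable (fun t => (deriv (deriv f) t + f t) * Real.sin (a - t))
        MeasureTheory.volume a x := hcont.intervalIntegrable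
    have heq : (∫ t in a..x, (iteratedDerivWithin 2 f I t + f t) * Real.sin (a - t))
        = ∫ t in a..x, (deriv (deriv f) t + f t) * Real.sin (a - t) := by
      apply intervalIntegral.integral_congr
      intro t ht
      simp only
      rw [hiter t (hsub ht)]
    rw [heq, intervalIntegral.integral_eq_sub_of_hasDerivAt hF hint]
    simp only [sub_self, Real.sin_zero, Real.cos_zero, mul_zero, mul_one, zero_add]
    ring
  rw [key a1 ha1, key a2 ha2]
  have h21 : Real.sin (a2 - a1) = -Real.sin (a1 - a2) := by
    rw [show a2 - a1 = -(a1 - a2) by ring, Real.sin_neg]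
  have e1 : Real.sin (a1 - x) = -Real.sin (x - a1) := by
    rw [show a1 - x = -(x - a1) by ring, Real.sin_neg]
  have e2 : Real.sin (a2 - x) = -Real.sin (x - a2) := by
    rw [show a2 - x = -(x - a2) by ring, Real.sin_neg]
  have e3 : Real.cos (a1 - x) = Real.cos (x - a1) := by
    rw [show a1 - x = -(x - a1) by ring, Real.cos_neg]
  have e4 : Real.cos (a2 - x) = Real.cos (x - a2) := by
    rw [show a2 - x = -(x - a2) by ring, Real.cos_neg]
  have key2 : Real.sin (a1 - a2) = Real.sin (x - a2) * Real.cos (x - a1)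
      - Real.cos (x - a2) * Real.sin (x - a1) := by
    rw [← Real.sin_sub]; ring_nf
  rw [h21, e1, e2, e3, e4]
  rw [show (deriv f x * -Real.sin (x - a1) + f x * Real.cos (x - a1)) *
        (Real.sin (x - a2) / Real.sin (a1 - a2)) +
      (deriv f x * -Real.sin (x - a2) + f x * Real.cos (x - a2)) *
        (Real.sin (x - a1) / -Real.sin (a1 - a2)) =
      f x * ((Real.sin (x - a2) * Real.cos (x - a1) -
        Real.cos (x - a2) * Real.sin (x - a1)) / Real.sin (a1 - a2)) from by ring]
  rw [← key2, div_self hsin, mul_one]
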